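/- Let τ > 0, σ > 1, M_p = p^{τ p^σ}, M_0 = 1, and m_p = M_p/M_{p−1} for p ≥ 1. Then for all p ≥ 2: (e/2^σ)^{τ p^{σ−1}/2^{σ−1}} · p^{τ σ p^{σ−1}/2^{σ−1}} ≤ m_p ≤ e^{τ p^{σ−1}} · p^{τ σ p^{σ−1}}. -/

import Mathlib

open Real

/-- Bounds on m_p = M_p/M_{p−1} for M_p = p^{τ p^σ}, for p ≥ 2. -/
theorem stmt_10 (τ σ : ℝ) (hτ : 0 < τ) (hσ : 1 < σ) (M : ℕ → ℝ) (m : ℕ → ℝ)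
    (hM0 : M 0 = 1)
    (hM : ∀ p : ℕ, 1 ≤ p → M p = (p : ℝ) ^ (τ * (p : ℝ) ^ σ))
    (hm : ∀ p : ℕ, 1 ≤ p → m p = M p / M (p - 1)) :
    ∀ p : ℕ, 2 ≤ p →
      (Real.exp 1 / (2 : ℝ) ^ σ) ^ (τ * (p : ℝ) ^ (σ - 1) / (2 : ℝ) ^ (σ - 1)) *
          (p : ℝ) ^ (τ * σ * (p : ℝ) ^ (σ - 1) / (2 : ℝ) ^ (σ - 1)) ≤ m p ∧
      m p ≤ Real.exp (τ * (p : ℝ) ^ (σ - 1)) * (p : ℝ) ^ (τ * σ * (p : ℝ) ^ (σ - 1)) := by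
  intro p hp
  set f : ℝ → ℝ := fun x => τ * (x ^ σ * Real.log x) with hf
  set f' : ℝ → ℝ := fun x => τ * (x ^ (σ - 1) * (σ * Real.log x + 1)) with hf'
  -- derivative
  have hderiv : ∀ x : ℝ, 0 < x → HasDerivAt f (f' x) x := by
    intro x hx
    have h1 : HasDerivAt (fun x : ℝ => x ^ σ) (σ * x ^ (σ - 1)) x :=
      Real.hasDerivAt_rpow_const (Or.inl hx.ne')
    have h2 : HasDerivAt Real.log x⁻¹ x := Real.hasDerivAt_log hx.ne'
    have h3 : HasDerivAt (fun y : ℝ => τ * (y ^ σ * Real.log y))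
        (τ * (σ * x ^ (σ - 1) * Real.log x + x ^ σ * x⁻¹)) x := (h1.mul h2).const_mul τ
    convert h3 using 1
    have hx1 : x ^ σ * x⁻¹ = x ^ (σ - 1) := by
      rw [Real.rpow_sub_one hx.ne']
      field_simp
    simp only [hf']
    rw [← hx1]; ring
  -- monotonicity of f' on [1, ∞)
  have hmono : ∀ x y : ℝ, 1 ≤ x → x ≤ y → f' x ≤ f' y := by
    intro x y hx hxy
    have hy : (1:ℝ) ≤ y := le_trans hx hxy
    have h1 : x ^ (σ - 1) ≤ y ^ (σ - 1) :=
      Real.rpow_le_rpow (by linarith) hxy (by linarith)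
    have h2 : σ * Real.log x + 1 ≤ σ * Real.log y + 1 := by
      have := Real.log_le_log (by linarith) hxy
      nlinarith [Real.log_nonneg hx]
    have h3 : (0:ℝ) ≤ σ * Real.log x + 1 := by
      nlinarith [Real.log_nonneg hx]
    have h4 : (0:ℝ) ≤ y ^ (σ - 1) := Real.rpow_nonneg (by linarith) _
    have := mul_le_mul h1 h2 h3 h4
    exact mul_le_mul_of_nonneg_left this hτ.le
  set P : ℝ := (p : ℝ) with hPdef
  have hP2 : (2:ℝ) ≤ P := by rw [hPdef]; exact_mod_cast hp
  have hP0 : (0:ℝ) < P := by linarith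
  have hP1 : (0:ℝ) < P - 1 := by linarith
  -- MVT
  obtain ⟨c, hc, hceq⟩ := exists_hasDerivAt_eq_slope f f' (by linarith : P - 1 < P)
    (fun x hx => (hderiv x (by rcases hx with ⟨h, _⟩; linarith)).continuousAt.continuousWithinAt)
    (fun x hx => hderiv x (by rcases hx with ⟨h, _⟩; linarith))
  have hslope : f P - f (P - 1) = f' c := by
    rw [hceq]; ring
  -- m p = exp (f' c)
  have hcast : ((p - 1 : ℕ) : ℝ) = P - 1 := by
    have : 1 ≤ p := by omega
    push_cast [Nat.cast_sub this]
    ring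
  have hmp : m p = Real.exp (f' c) := by
    rw [hm p (by omega), hM p (by omega), hM (p - 1) (by omega), hcast]
    rw [Real.rpow_def_of_pos hP0, Real.rpow_def_of_pos hP1, ← Real.exp_sub, ← hslope]
    simp only [hf]
    ring_nf
    rw [hPdef]
  -- bound c between P/2 and P
  have hcP : f' c ≤ f' P := hmono c P (by rcases hc with ⟨h1, _⟩; linarith) (hc.2.le)
  have hc2 : f' (P / 2) ≤ f' c := by
    apply hmono
    · linarith
    · rcases hc with ⟨h1, _⟩; linarith
  constructor
  · -- lower bound
    have hkey : (Real.exp 1 / (2 : ℝ) ^ σ) ^ (τ * P ^ (σ - 1) / (2 : ℝ) ^ (σ - 1)) *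
        P ^ (τ * σ * P ^ (σ - 1) / (2 : ℝ) ^ (σ - 1)) = Real.exp (f' (P / 2)) := by
      have h2pos : (0:ℝ) < (2:ℝ) ^ σ := Real.rpow_pos_of_pos (by norm_num) _
      have hbase : (0:ℝ) < Real.exp 1 / (2 : ℝ) ^ σ := div_pos (Real.exp_pos 1) h2pos
      have hPr : P ^ (τ * σ * P ^ (σ - 1) / (2:ℝ) ^ (σ - 1)) =
          Real.exp (Real.log P * (τ * σ * P ^ (σ - 1) / (2:ℝ) ^ (σ - 1))) :=
        Real.rpow_def_of_pos hP0 _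
      rw [Real.rpow_def_of_pos hbase, hPr, ← Real.exp_add]
      congr 1
      have hlb : Real.log (Real.exp 1 / (2 : ℝ) ^ σ) = 1 - σ * Real.log 2 := by
        rw [Real.log_div (Real.exp_ne_zero 1) h2pos.ne', Real.log_exp,
          Real.log_rpow (by norm_num)]
      have hhalf : (P / 2) ^ (σ - 1) = P ^ (σ - 1) / (2:ℝ) ^ (σ - 1) :=
        Real.div_rpow hP0.le (by norm_num) _
      have hlog : Real.log (P / 2) = Real.log P - Real.log 2 :=
        Real.log_div hP0.ne' (by norm_num)
      simp only [hf', hhalf, hlog, hlb]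
      ring
    rw [hkey, hmp]
    exact Real.exp_le_exp.mpr hc2
  · -- upper bound
    have hkey : Real.exp (τ * P ^ (σ - 1)) * P ^ (τ * σ * P ^ (σ - 1)) =
        Real.exp (f' P) := by
      have hPr : P ^ (τ * σ * P ^ (σ - 1)) =
          Real.exp (Real.log P * (τ * σ * P ^ (σ - 1))) := Real.rpow_def_of_pos hP0 _
      rw [hPr, ← Real.exp_add]
      congr 1
      simp only [hf']
      ring
    rw [hkey, hmp]
    exact Real.exp_le_exp.mpr hcP
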